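/- For any two 2-forms a, b on ℝ^(2n), their inner product satisfies ⟨a, b⟩ ≤ n · comass(a) · comass(b). -/

import Mathlib

open scoped BigOperators RealInnerProductSpace

/-- Comass of a k-form on a real inner product space: the supremum of |ω(v₁,…,v_k)|
over tuples of vectors of norm at most 1. -/
noncomputable def comass {E : Type*} [NormedAddCommGroup E] [InnerProductSpace ℝ E] {k : ℕ}
    (ω : E [⋀^Fin k]→ₗ[ℝ] ℝ) : ℝ :=
  sSup {r | ∃ v : Fin k → E, (∀ i, ‖v i‖ ≤ 1) ∧ r = |ω v|}

/-- Wedge product of real-valued alternating forms (shuffle convention, so that the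
wedge of dual basis covectors evaluates as a determinant). -/
noncomputable def wedge {E : Type*} [AddCommGroup E] [Module ℝ E] {p q : ℕ}
    (a : E [⋀^Fin p]→ₗ[ℝ] ℝ) (b : E [⋀^Fin q]→ₗ[ℝ] ℝ) :
    E [⋀^Fin (p + q)]→ₗ[ℝ] ℝ :=
  (TensorProduct.lid ℝ ℝ).toLinearMap.compAlternatingMap
    ((a.domCoprod b).domDomCongr finSumFinEquiv)

/-- The standard inner product of two k-forms on Euclidean n-space, for which the
increasing wedges of standard dual basis vectors are orthonormal. -/
noncomputable def formInner {n k : ℕ}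
    (a b : (EuclideanSpace ℝ (Fin n)) [⋀^Fin k]→ₗ[ℝ] ℝ) : ℝ :=
  (1 / (k.factorial : ℝ)) *
    ∑ f : Fin k → Fin n,
      a (fun i => EuclideanSpace.single (f i) 1) * b (fun i => EuclideanSpace.single (f i) 1)

/-- The standard volume form on Euclidean n-space. -/
noncomputable def vol (n : ℕ) : (EuclideanSpace ℝ (Fin n)) [⋀^Fin n]→ₗ[ℝ] ℝ :=
  (EuclideanSpace.basisFun (Fin n) ℝ).toBasis.det

section Aux

variable {N : ℕ}

private lemma euclid_expand (v : EuclideanSpace ℝ (Fin N)) :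
    v = ∑ j, v j • EuclideanSpace.single j 1 := by
  conv_lhs => rw [← (EuclideanSpace.basisFun (Fin N) ℝ).sum_repr v]
  simp [EuclideanSpace.basisFun_apply, EuclideanSpace.basisFun_repr]

private lemma abs_coord_le (v : EuclideanSpace ℝ (Fin N)) (j : Fin N) : |v j| ≤ ‖v‖ := by
  have h := abs_real_inner_le_norm (EuclideanSpace.single j (1:ℝ)) v
  simpa [EuclideanSpace.inner_single_left, EuclideanSpace.norm_single] using h

private lemma comass_bddAbove {k : ℕ} (ω : (EuclideanSpace ℝ (Fin N)) [⋀^Fin k]→ₗ[ℝ] ℝ) :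
    BddAbove {r | ∃ v : Fin k → EuclideanSpace ℝ (Fin N), (∀ i, ‖v i‖ ≤ 1) ∧ r = |ω v|} := by
  refine ⟨∑ r : Fin k → Fin N, |ω fun i => EuclideanSpace.single (r i) 1|, ?_⟩
  rintro x ⟨v, hv, rfl⟩
  have hexp : ω v = ∑ r : Fin k → Fin N,
      (∏ i, v i (r i)) • ω (fun i => EuclideanSpace.single (r i) 1) := by
    have h1 : ω v = ω (fun i => ∑ j, v i j • EuclideanSpace.single j 1) := by
      congr 1; funext i; exact euclid_expand (v i)
    rw [h1]
    rw [show (ω (fun i => ∑ j, v i j • EuclideanSpace.single j 1)) =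
        ω.toMultilinearMap (fun i => ∑ j, v i j • EuclideanSpace.single j 1) from rfl,
      MultilinearMap.map_sum]
    refine Finset.sum_congr rfl fun r _ => ?_
    exact ω.toMultilinearMap.map_smul_univ (fun i => v i (r i))
      (fun i => EuclideanSpace.single (r i) 1)
  rw [hexp]
  refine (Finset.abs_sum_le_sum_abs _ _).trans (Finset.sum_le_sum fun r _ => ?_)
  rw [smul_eq_mul, abs_mul]
  refine mul_le_of_le_one_left (abs_nonneg _) ?_
  rw [Finset.abs_prod]
  exact Finset.prod_le_one (fun i _ => abs_nonneg _)
    (fun i _ => (abs_coord_le _ _).trans (hv i))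

private lemma eval_le_comass {k : ℕ} (ω : (EuclideanSpace ℝ (Fin N)) [⋀^Fin k]→ₗ[ℝ] ℝ)
    (v : Fin k → EuclideanSpace ℝ (Fin N)) (hv : ∀ i, ‖v i‖ ≤ 1) : |ω v| ≤ comass ω :=
  le_csSup (comass_bddAbove ω) ⟨v, hv, rfl⟩

private lemma comass_nonneg {k : ℕ} (ω : (EuclideanSpace ℝ (Fin N)) [⋀^Fin k]→ₗ[ℝ] ℝ) :
    0 ≤ comass ω :=
  le_trans (abs_nonneg _) (eval_le_comass ω (fun _ => 0) (fun _ => by simp))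

private noncomputable def curry2 (ω : (EuclideanSpace ℝ (Fin N)) [⋀^Fin 2]→ₗ[ℝ] ℝ)
    (v : EuclideanSpace ℝ (Fin N)) : EuclideanSpace ℝ (Fin N) →ₗ[ℝ] ℝ where
  toFun w := ω ![v, w]
  map_add' x y := by
    have h : ∀ z : EuclideanSpace ℝ (Fin N), ![v, z] = Function.update ![v, 0] 1 z := by
      intro z; funext j; fin_cases j <;> simp [Function.update]
    show ω ![v, x + y] = ω ![v, x] + ω ![v, y]
    rw [h (x + y), h x, h y, AlternatingMap.map_update_add]
  map_smul' c x := by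
    have h : ∀ z : EuclideanSpace ℝ (Fin N), ![v, z] = Function.update ![v, 0] 1 z := by
      intro z; funext j; fin_cases j <;> simp [Function.update]
    show ω ![v, c • x] = c • ω ![v, x]
    rw [h (c • x), h x, AlternatingMap.map_update_smul]

@[simp] private lemma curry2_apply (ω : (EuclideanSpace ℝ (Fin N)) [⋀^Fin 2]→ₗ[ℝ] ℝ)
    (v w : EuclideanSpace ℝ (Fin N)) : curry2 ω v w = ω ![v, w] := rfl

private lemma two_form_le (ω : (EuclideanSpace ℝ (Fin N)) [⋀^Fin 2]→ₗ[ℝ] ℝ)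
    (v w : EuclideanSpace ℝ (Fin N)) : ω ![v, w] ≤ comass ω * (‖v‖ * ‖w‖) := by
  by_cases hv : v = 0
  · subst hv
    have h0 : ω ![(0 : EuclideanSpace ℝ (Fin N)), w] = 0 := ω.map_coord_zero 0 (by simp)
    simp [h0]
  by_cases hw : w = 0
  · subst hw
    have h0 : ω ![v, (0 : EuclideanSpace ℝ (Fin N))] = 0 := ω.map_coord_zero 1 (by simp)
    simp [h0]
  have hvn : ‖v‖ ≠ 0 := norm_ne_zero_iff.mpr hv
  have hwn : ‖w‖ ≠ 0 := norm_ne_zero_iff.mpr hw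
  set u : Fin 2 → EuclideanSpace ℝ (Fin N) := ![‖v‖⁻¹ • v, ‖w‖⁻¹ • w] with hu
  have harg : (fun i => (![‖v‖, ‖w‖] : Fin 2 → ℝ) i • u i) = ![v, w] := by
    funext i; fin_cases i <;>
      simp [hu, smul_smul, mul_inv_cancel₀ hvn, mul_inv_cancel₀ hwn]
  have key : ω ![v, w] = (‖v‖ * ‖w‖) * ω u := by
    have h := ω.toMultilinearMap.map_smul_univ (![‖v‖, ‖w‖] : Fin 2 → ℝ) u
    rw [harg] at h
    simpa [Fin.prod_univ_two] using h
  have hu1 : ∀ i, ‖u i‖ ≤ 1 := by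
    intro i
    fin_cases i <;>
      simp [hu, norm_smul, abs_of_nonneg, inv_mul_cancel₀ hvn, inv_mul_cancel₀ hwn]
  have h1 : ω u ≤ comass ω := le_trans (le_abs_self _) (eval_le_comass ω u hu1)
  rw [key, mul_comm (comass ω) _]
  exact mul_le_mul_of_nonneg_left h1 (by positivity)

private lemma row_le (a b : (EuclideanSpace ℝ (Fin N)) [⋀^Fin 2]→ₗ[ℝ] ℝ) (i : Fin N) :
    ∑ j : Fin N, a ![EuclideanSpace.single i 1, EuclideanSpace.single j 1]
      * b ![EuclideanSpace.single i 1, EuclideanSpace.single j 1] ≤ comass a * comass b := by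
  classical
  set e : Fin N → EuclideanSpace ℝ (Fin N) := fun l => EuclideanSpace.single l 1 with he
  have hei : ∀ l, ‖e l‖ = 1 := fun l => by simp [he, EuclideanSpace.norm_single]
  set w : EuclideanSpace ℝ (Fin N) := ∑ j, b ![e i, e j] • e j with hw
  have hsum : ∀ ω : (EuclideanSpace ℝ (Fin N)) [⋀^Fin 2]→ₗ[ℝ] ℝ,
      ω ![e i, w] = ∑ j, b ![e i, e j] * ω ![e i, e j] := by
    intro ω
    rw [← curry2_apply, hw, map_sum]
    simp only [map_smul, smul_eq_mul, curry2_apply]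
  have horth : ∀ j l : Fin N, (inner ℝ (e j) (e l) : ℝ) = if j = l then 1 else 0 := by
    intro j l
    simp [he, EuclideanSpace.inner_single_left, EuclideanSpace.single_apply, eq_comm]
  have hnorm2 : ‖w‖ ^ 2 = b ![e i, w] := by
    rw [hsum b, ← real_inner_self_eq_norm_sq]
    nth_rw 1 [hw]
    rw [sum_inner]
    refine Finset.sum_congr rfl fun j _ => ?_
    rw [real_inner_smul_left]
    congr 1
    rw [hw, inner_sum]
    simp only [real_inner_smul_right, horth, mul_ite, mul_one, mul_zero]
    simp [Finset.sum_ite_eq]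
  have hwle : ‖w‖ ≤ comass b := by
    rcases eq_or_lt_of_le (norm_nonneg w) with h0 | h0
    · rw [← h0]; exact comass_nonneg b
    · have h2 := two_form_le b (e i) w
      rw [hei i, one_mul] at h2
      nlinarith
  have hgoal : ∑ j : Fin N, a ![e i, e j] * b ![e i, e j] = a ![e i, w] := by
    rw [hsum a]
    exact Finset.sum_congr rfl fun j _ => mul_comm _ _
  calc ∑ j : Fin N, a ![e i, e j] * b ![e i, e j] = a ![e i, w] := hgoal
    _ ≤ comass a * (‖e i‖ * ‖w‖) := two_form_le a (e i) w
    _ = comass a * ‖w‖ := by rw [hei i, one_mul]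
    _ ≤ comass a * comass b := mul_le_mul_of_nonneg_left hwle (comass_nonneg a)


end Aux

/-- For any two 2-forms a, b on ℝ^(2n),
⟨a, b⟩ ≤ n · comass(a) · comass(b). -/
theorem formInner_le_comass (n : ℕ)
    (a b : (EuclideanSpace ℝ (Fin (2 * n))) [⋀^Fin 2]→ₗ[ℝ] ℝ) :
    formInner a b ≤ n * comass a * comass b := by
  classical
  unfold formInner
  have hsum2 : ∑ f : Fin 2 → Fin (2 * n),
      a (fun i => EuclideanSpace.single (f i) 1) * b (fun i => EuclideanSpace.single (f i) 1)
      = ∑ i : Fin (2 * n), ∑ j : Fin (2 * n),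
        a ![EuclideanSpace.single i 1, EuclideanSpace.single j 1]
          * b ![EuclideanSpace.single i 1, EuclideanSpace.single j 1] := by
    have h1 : ∑ f : Fin 2 → Fin (2 * n),
        a (fun i => EuclideanSpace.single (f i) 1) * b (fun i => EuclideanSpace.single (f i) 1)
        = ∑ p : Fin (2 * n) × Fin (2 * n),
          a ![EuclideanSpace.single p.1 1, EuclideanSpace.single p.2 1]
            * b ![EuclideanSpace.single p.1 1, EuclideanSpace.single p.2 1] := by
      refine Fintype.sum_equiv (finTwoArrowEquiv (Fin (2 * n))) _ _ fun f => ?_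
      have hf : (fun i => EuclideanSpace.single (f i) (1:ℝ))
          = ![EuclideanSpace.single (f 0) 1, EuclideanSpace.single (f 1) 1] := by
        funext i; fin_cases i <;> rfl
      rw [hf]; rfl
    rw [h1, Fintype.sum_prod_type]
  rw [hsum2]
  have hS : ∑ i : Fin (2 * n), ∑ j : Fin (2 * n),
      a ![EuclideanSpace.single i 1, EuclideanSpace.single j 1]
        * b ![EuclideanSpace.single i 1, EuclideanSpace.single j 1]
      ≤ (2 * n : ℝ) * (comass a * comass b) := by
    calc _ ≤ ∑ _i : Fin (2 * n), comass a * comass b :=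
          Finset.sum_le_sum fun i _ => row_le a b i
      _ = (2 * n : ℝ) * (comass a * comass b) := by
          simp [Finset.sum_const, Finset.card_univ]
  have hfac : ((Nat.factorial 2 : ℕ) : ℝ) = 2 := by norm_num [Nat.factorial]
  rw [hfac]
  have h2 := mul_le_mul_of_nonneg_left hS (by norm_num : (0:ℝ) ≤ 1 / 2)
  calc (1 / 2 : ℝ) * _ ≤ 1 / 2 * ((2 * n : ℝ) * (comass a * comass b)) := h2
    _ = n * comass a * comass b := by ring
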